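/- Let f ∈ ℤ[X] be a monic polynomial of degree d that is irreducible over ℚ, with roots β₁,…,β_d, and let Z be the d×d Vandermonde matrix with entries Z_{ij} = β_j^{i-1}. If r ∈ ℚ^d is a rational vector such that at least one component of Z⁻¹ r vanishes, then r = 0. -/
import Mathlib


open Matrix Polynomial

/-- If `f ∈ ℤ[X]` is monic of degree `d`, irreducible over `ℚ`, with roots
`β 0, …, β (d-1)`, `Z` is the Vandermonde matrix `Z i j = (β j)^i`, and `r` is a
rational vector such that some component of `Z⁻¹ r` vanishes, then `r = 0`. -/
theorem stmt_1 {d : ℕ} (hd : 1 ≤ d)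
    (f : Polynomial ℤ) (hmon : f.Monic) (hdeg : f.natDegree = d)
    (hirr : Irreducible (f.map (Int.castRingHom ℚ)))
    (β : Fin d → ℂ) (hinj : Function.Injective β)
    (hroot : ∀ j, Polynomial.aeval (β j) f = 0)
    (Z : Matrix (Fin d) (Fin d) ℂ) (hZ : ∀ i j, Z i j = β j ^ (i : ℕ))
    (r : Fin d → ℚ)
    (hvan : ∃ i, (Z⁻¹ *ᵥ fun k => ((r k : ℂ))) i = 0) :
    r = 0 := by
  obtain ⟨i, hi⟩ := hvan
  set rC : Fin d → ℂ := fun k => ((r k : ℂ)) with hrC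
  set c : Fin d → ℂ := Z⁻¹ *ᵥ rC with hc
  set F : ℂ[X] := f.map (Int.castRingHom ℂ) with hF
  have hcomp : (algebraMap ℚ ℂ).comp (Int.castRingHom ℚ) = Int.castRingHom ℂ := by
    ext n; simp
  have hFQ : F = (f.map (Int.castRingHom ℚ)).map (algebraMap ℚ ℂ) := by
    rw [Polynomial.map_map, hcomp]
  have hFroot : ∀ j, F.eval (β j) = 0 := by
    intro j
    have := hroot j
    rwa [aeval_def, ← eval_map] at this
  have hFmon : F.Monic := hmon.map _
  have hFdeg : F.natDegree = d := by rw [hF, hmon.natDegree_map, hdeg]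
  -- Z is invertible
  have hdet : Z.det ≠ 0 := by
    have : Z = (Matrix.vandermonde β)ᵀ := by
      ext i j; simp [hZ, Matrix.vandermonde]
    rw [this, Matrix.det_transpose]
    exact Matrix.det_vandermonde_ne_zero_iff.mpr hinj
  have hZc : ∀ m : Fin d, ∑ l, β l ^ (m : ℕ) * c l = rC m := by
    intro m
    have h1 : Z *ᵥ c = rC := by
      rw [hc, Matrix.mulVec_mulVec, Matrix.mul_nonsing_inv Z (isUnit_iff_ne_zero.mpr hdet),
        Matrix.one_mulVec]
    have := congrFun h1 m
    simpa [Matrix.mulVec, dotProduct, hZ] using this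
  -- the auxiliary polynomial coefficients
  set q : Fin d → ℕ → ℂ := fun j m => ∑ k ∈ Finset.Ioc m d, (f.coeff k : ℂ) * β j ^ (k - m - 1)
    with hq
  have hevalF : ∀ x : ℂ, F.eval x = ∑ k ∈ Finset.range (d + 1), (f.coeff k : ℂ) * x ^ k := by
    intro x
    rw [eval_eq_sum_range, hFdeg]
    congr 1; ext k
    simp [hF, coeff_map]
  have keyA : ∀ j, ∀ x : ℂ,
      (∑ m ∈ Finset.range d, q j m * x ^ m) * (x - β j) = F.eval x := by
    intro j x
    have swap : ∑ m ∈ Finset.range d, ∑ k ∈ Finset.Ioc m d,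
        ((f.coeff k : ℂ) * β j ^ (k - m - 1)) * x ^ m
        = ∑ k ∈ Finset.range (d + 1), ∑ m ∈ Finset.range k,
        ((f.coeff k : ℂ) * β j ^ (k - m - 1)) * x ^ m := by
      apply Finset.sum_comm'
      intro m k
      simp only [Finset.mem_range, Finset.mem_Ioc]
      omega
    calc (∑ m ∈ Finset.range d, q j m * x ^ m) * (x - β j)
        = (∑ k ∈ Finset.range (d + 1), (f.coeff k : ℂ) *
            ∑ m ∈ Finset.range k, x ^ m * β j ^ (k - 1 - m)) * (x - β j) := by
          congr 1
          rw [hq]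
          simp only [Finset.sum_mul]
          rw [swap]
          congr 1; ext k
          rw [Finset.mul_sum]
          congr 1; ext m
          have : k - m - 1 = k - 1 - m := by omega
          rw [this]; ring
      _ = ∑ k ∈ Finset.range (d + 1), (f.coeff k : ℂ) * (x ^ k - β j ^ k) := by
          rw [Finset.sum_mul]
          congr 1; ext k
          rw [mul_assoc, geom_sum₂_mul]
      _ = F.eval x - F.eval (β j) := by
          rw [hevalF x, hevalF (β j), ← Finset.sum_sub_distrib]
          congr 1; ext k; ring
      _ = F.eval x := by rw [hFroot j, sub_zero]
  -- derivative value
  have hder : ∀ j, F.derivative.eval (β j) = ∑ m ∈ Finset.range d, q j m * β j ^ m := by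
    intro j
    have hpoly : (∑ m ∈ Finset.range d, C (q j m) * X ^ m) * (X - C (β j)) = F := by
      apply Polynomial.funext
      intro x
      rw [eval_mul, eval_finset_sum, ← keyA j x]
      simp
    have h2 : F.derivative.eval (β j) = Polynomial.eval (β j) (∑ m ∈ Finset.range d, C (q j m) * X ^ m) := by
      rw [← hpoly, derivative_mul]
      simp
    rw [h2, eval_finset_sum]
    simp
  have hQl : ∀ j l, l ≠ j → ∑ m ∈ Finset.range d, q j m * β l ^ m = 0 := by
    intro j l hlj
    have := keyA j (β l)
    rw [hFroot l] at this
    have hne : β l - β j ≠ 0 := sub_ne_zero.mpr (fun h => hlj (hinj h))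
    exact (mul_eq_zero.mp this).resolve_right hne
  -- derivative nonzero via separability
  have hsep : F.Separable := by
    rw [hFQ]
    exact (hirr.separable).map
  have hderne : ∀ j, F.derivative.eval (β j) ≠ 0 := by
    intro j hz
    obtain ⟨u, v, huv⟩ := hsep
    have := congrArg (Polynomial.eval (β j)) huv
    simp [hFroot j, hz] at this
  -- the rational polynomial G
  set G : ℚ[X] := ∑ m : Fin d, C (r m) *
      (∑ k ∈ Finset.Ioc (m : ℕ) d, C ((f.coeff k : ℚ)) * X ^ (k - (m : ℕ) - 1)) with hG
  have hGval : ∀ j, aeval (β j) G = c j * F.derivative.eval (β j) := by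
    intro j
    have h1 : aeval (β j) G = ∑ m : Fin d, rC m * q j (m : ℕ) := by
      rw [hG]
      simp [hG, hq, hrC, eq_ratCast, Finset.mul_sum]
    rw [h1]
    have h2 : ∀ m : Fin d, rC m * q j (m : ℕ) = ∑ l, (β l ^ (m : ℕ) * c l) * q j (m : ℕ) := by
      intro m; rw [← Finset.sum_mul, hZc m]
    simp_rw [h2]
    rw [Finset.sum_comm]
    have h3 : ∀ l, ∑ m : Fin d, (β l ^ (m : ℕ) * c l) * q j (m : ℕ)
        = c l * ∑ m ∈ Finset.range d, q j m * β l ^ m := by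
      intro l
      rw [Finset.mul_sum, ← Fin.sum_univ_eq_sum_range (fun m => c l * (q j m * β l ^ m)) d]
      congr 1; ext m; ring
    simp_rw [h3]
    rw [Finset.sum_eq_single j]
    · rw [hder j]
    · intro l _ hlj
      rw [hQl j l hlj, mul_zero]
    · intro h; exact absurd (Finset.mem_univ j) h
  -- G vanishes at β i
  have hGi : aeval (β i) G = 0 := by
    rw [hGval i]
    have : c i = 0 := hi
    rw [this, zero_mul]
  -- degree of G < d
  have hGdeg : G.degree < (d : WithBot ℕ) := by
    rw [hG]
    apply lt_of_le_of_lt (Polynomial.degree_sum_le _ _)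
    rw [Finset.sup_lt_iff (by exact_mod_cast WithBot.bot_lt_coe d)]
    intro m _
    apply lt_of_le_of_lt (Polynomial.degree_mul_le _ _)
    have h1 : (C (r m)).degree ≤ 0 := degree_C_le
    have h2 : (∑ k ∈ Finset.Ioc (m : ℕ) d, C ((f.coeff k : ℚ)) * X ^ (k - (m : ℕ) - 1)).degree
        < (d : WithBot ℕ) := by
      apply lt_of_le_of_lt (Polynomial.degree_sum_le _ _)
      rw [Finset.sup_lt_iff (by exact_mod_cast WithBot.bot_lt_coe d)]
      intro k hk
      apply lt_of_le_of_lt (Polynomial.degree_mul_le _ _)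
      have hk' : k - (m : ℕ) - 1 < d := by
        simp only [Finset.mem_Ioc] at hk; omega
      calc (C ((f.coeff k : ℚ))).degree + (X ^ (k - (m:ℕ) - 1) : ℚ[X]).degree
          ≤ 0 + (k - (m:ℕ) - 1 : ℕ) := add_le_add degree_C_le (degree_X_pow_le _)
        _ < (d : WithBot ℕ) := by
            rw [zero_add]
            exact_mod_cast hk'
    calc (C (r m)).degree + _ ≤ 0 + _ := add_le_add h1 le_rfl
      _ < (d : WithBot ℕ) := by rwa [zero_add]
  -- β i integral over ℚ, minpoly is f.map ℚ
  have hrootQ : aeval (β i) (f.map (Int.castRingHom ℚ)) = 0 := by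
    rw [aeval_def, ← eval_map, Polynomial.map_map, hcomp]
    exact hFroot i
  have hminp : f.map (Int.castRingHom ℚ) = minpoly ℚ (β i) :=
    minpoly.eq_of_irreducible_of_monic hirr hrootQ (hmon.map _)
  have hGzero : G = 0 := by
    by_contra hG0
    have h1 := minpoly.degree_le_of_ne_zero ℚ (β i) hG0 hGi
    rw [← hminp] at h1
    have h2 : (f.map (Int.castRingHom ℚ)).degree = (d : WithBot ℕ) := by
      rw [degree_eq_natDegree (hmon.map (Int.castRingHom ℚ)).ne_zero,
        hmon.natDegree_map, hdeg]
    rw [h2] at h1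
    exact absurd (lt_of_le_of_lt h1 hGdeg) (lt_irrefl _)
  -- conclude c = 0
  have hcz : ∀ j, c j = 0 := by
    intro j
    have := hGval j
    rw [hGzero, map_zero] at this
    exact (mul_eq_zero.mp this.symm).resolve_right (hderne j)
  have hrz : ∀ m : Fin d, rC m = 0 := by
    intro m
    rw [← hZc m]
    simp [hcz]
  funext m
  have := hrz m
  simp only [hrC] at this
  exact_mod_cast this
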